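/- For integers n ≥ 1, 0 ≤ k ≤ n, and 0 ≤ r < n, the number of binary necklaces of length n with k ones whose co-period divides r equals (1/n) · Σ_{d | gcd(n,k)} C(n/d, k/d) · c_d(r), where c_d(r) is the Ramanujan sum. -/
import Mathlib


open Finset

/-- Number of ones in a cyclic binary word of length `n`. -/
noncomputable def onesCount (n : ℕ) (w : ZMod n → Bool) : ℕ :=
  Nat.card {i : ZMod n // w i = true}

/-- The co-period of a cyclic binary word `w` of length `n`: the size of its
stabilizer under cyclic rotation (equivalently, the `j` such that `w = v^j`
with `v` primitive). -/
noncomputable def coPeriod (n : ℕ) (w : ZMod n → Bool) : ℕ :=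
  Nat.card {t : ZMod n // ∀ i, w (i + t) = w i}

/-- Two cyclic words are related iff they are cyclic rotations of each other. -/
def rotRel (n : ℕ) (u v : ZMod n → Bool) : Prop :=
  ∃ t : ZMod n, ∀ i, u i = v (i + t)

theorem rotRel_equivalence (n : ℕ) : Equivalence (rotRel n) := by
  constructor
  · exact fun u => ⟨0, fun i => by rw [add_zero]⟩
  · rintro u v ⟨t, h⟩
    exact ⟨-t, fun i => by rw [h, neg_add_cancel_right]⟩
  · rintro u v w ⟨t1, h1⟩ ⟨t2, h2⟩
    exact ⟨t1 + t2, fun i => by rw [h1, h2, ← add_assoc]⟩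

def rotSetoid (n : ℕ) : Setoid (ZMod n → Bool) := ⟨rotRel n, rotRel_equivalence n⟩

/-- The number of binary necklaces of length `n` with `k` ones. -/
noncomputable def NCard (n k : ℕ) : ℕ :=
  Nat.card (Quotient (Setoid.comap
    (Subtype.val : {w : ZMod n → Bool // onesCount n w = k} → _) (rotSetoid n)))

/-- The number of binary necklaces of length `n` with `k` ones whose co-period divides `r`. -/
noncomputable def NrCard (n k r : ℕ) : ℕ :=
  Nat.card (Quotient (Setoid.comap
    (Subtype.val : {w : ZMod n → Bool // onesCount n w = k ∧ coPeriod n w ∣ r} → _)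
    (rotSetoid n)))

/-- The number of `k`-element subsets of `{1,…,n}` whose elements sum to `r` mod `n`. -/
def SbarCard (n k r : ℕ) : ℕ :=
  ((Finset.Icc 1 n).powerset.filter
    (fun A => A.card = k ∧ (∑ a ∈ A, a) % n = r)).card

/-- The number of `k`-element subsets of `{1,…,n-1}` whose elements sum to `r` mod `n`. -/
def SCard (n k r : ℕ) : ℕ :=
  ((Finset.Icc 1 (n - 1)).powerset.filter
    (fun A => A.card = k ∧ (∑ a ∈ A, a) % n = r)).card

/-- The Ramanujan sum `c_d(r) = ∑_{j ∣ gcd(r,d)} j · μ(d/j)`. -/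
def ramanujanSum (d : ℕ) (r : ℤ) : ℤ :=
  ∑ j ∈ (Int.gcd r d).divisors, (j : ℤ) * ArithmeticFunction.moebius (d / j)

/-! ### Auxiliary results -/

section RamanujanAux

open ArithmeticFunction

/-- The arithmetic function `j ↦ j·[j ∣ r]`. -/
def NrAux.Ifun (r : ℕ) : ArithmeticFunction ℤ :=
  ⟨fun j => if j ∣ r then (j : ℤ) else 0, by by_cases h : (0:ℕ) ∣ r <;> simp [h]⟩

lemma NrAux.ramanujanSum_eq (r d : ℕ) (hd : d ≠ 0) :
    ramanujanSum d r = (Ifun r * (moebius : ArithmeticFunction ℤ)) d := by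
  rw [mul_apply, Nat.sum_divisorsAntidiagonal (f := fun a b => Ifun r a * moebius b)]
  unfold ramanujanSum
  have hfil : (Nat.gcd r d).divisors = d.divisors.filter (· ∣ r) := by
    ext j
    simp only [Nat.mem_divisors, Finset.mem_filter, Nat.dvd_gcd_iff]
    constructor
    · rintro ⟨⟨h1, h2⟩, _⟩; exact ⟨⟨h2, hd⟩, h1⟩
    · rintro ⟨⟨h2, _⟩, h1⟩
      refine ⟨⟨h1, h2⟩, ?_⟩
      simp [Nat.gcd_eq_zero_iff, hd]
  have hg : (Int.gcd (r : ℤ) (d : ℤ)) = Nat.gcd r d := by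
    simp [Int.gcd]
  rw [hg, hfil, Finset.sum_filter]
  refine Finset.sum_congr rfl fun j hj => ?_
  simp only [Ifun, ArithmeticFunction.coe_mk]
  split <;> simp

lemma NrAux.sum_ramanujanSum (r m : ℕ) :
    ∑ d ∈ m.divisors, ramanujanSum d r = if m ∣ r then (m : ℤ) else 0 := by
  have h1 : ∑ d ∈ m.divisors, ramanujanSum d r
      = ((Ifun r * moebius) * (zeta : ArithmeticFunction ℕ)) m := by
    rw [coe_mul_zeta_apply]
    exact Finset.sum_congr rfl fun d hd =>
      ramanujanSum_eq r d (Nat.pos_of_mem_divisors hd).ne'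
  rw [h1, mul_assoc, moebius_mul_coe_zeta, mul_one]
  rfl

end RamanujanAux

section ActionAux

instance NrAux.instVAddWord (n : ℕ) : VAdd (ZMod n) (ZMod n → Bool) :=
  ⟨fun t w => fun i => w (i + t)⟩

@[simp] lemma NrAux.vadd_word_apply {n : ℕ} (t : ZMod n) (w : ZMod n → Bool) (i : ZMod n) :
    (t +ᵥ w) i = w (i + t) := rfl

instance NrAux.instAddActionWord (n : ℕ) : AddAction (ZMod n) (ZMod n → Bool) where
  zero_vadd w := by funext i; simp
  add_vadd s t w := by funext i; simp [add_assoc]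

lemma NrAux.onesCount_vadd {n : ℕ} (t : ZMod n) (w : ZMod n → Bool) :
    onesCount n (t +ᵥ w) = onesCount n w := by
  unfold onesCount
  exact Nat.card_congr ((Equiv.addRight t).subtypeEquiv (fun i => by simp))

lemma NrAux.coPeriod_vadd {n : ℕ} (t : ZMod n) (w : ZMod n → Bool) :
    coPeriod n (t +ᵥ w) = coPeriod n w := by
  unfold coPeriod
  refine Nat.card_congr (Equiv.subtypeEquivRight (fun s => ?_))
  constructor
  · intro h i
    have := h (i - t)
    simpa [sub_add_cancel, sub_add_eq_add_sub, add_sub_cancel_right] using this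
  · intro h i
    simp only [vadd_word_apply]
    rw [add_right_comm]
    exact h (i + t)

def NrAux.subVAdd {n : ℕ} {P : (ZMod n → Bool) → Prop}
    (hP : ∀ (t : ZMod n) w, P w → P (t +ᵥ w)) :
    AddAction (ZMod n) {w : ZMod n → Bool // P w} where
  vadd t w := ⟨t +ᵥ w.val, hP t w.val w.prop⟩
  zero_vadd w := Subtype.ext (zero_vadd _ _)
  add_vadd s t w := Subtype.ext (add_vadd s t w.val)

open AddAction in
lemma NrAux.card_quot_mul (n : ℕ) [NeZero n] (P : (ZMod n → Bool) → Prop) [DecidablePred P]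
    (hP : ∀ (t : ZMod n) w, P w → P (t +ᵥ w)) :
    Nat.card (Quotient (Setoid.comap
      (Subtype.val : {w : ZMod n → Bool // P w} → _) (rotSetoid n))) * n
      = ∑ w ∈ univ.filter P, coPeriod n w := by
  letI : AddAction (ZMod n) {w : ZMod n → Bool // P w} := subVAdd hP
  have hvadd : ∀ (t : ZMod n) (w : {w : ZMod n → Bool // P w}), (t +ᵥ w).val = t +ᵥ w.val :=
    fun _ _ => rfl
  have hsetoid : Setoid.comap (Subtype.val : {w : ZMod n → Bool // P w} → _) (rotSetoid n)
      = AddAction.orbitRel (ZMod n) {w : ZMod n → Bool // P w} := by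
    apply Setoid.ext
    intro u v
    show rotRel n u.val v.val ↔ u ∈ AddAction.orbit (ZMod n) v
    constructor
    · rintro ⟨t, ht⟩
      refine ⟨t, Subtype.ext ?_⟩
      rw [hvadd]
      funext i
      exact (ht i).symm
    · rintro ⟨t, ht⟩
      refine ⟨t, fun i => ?_⟩
      rw [← ht, hvadd]
      rfl
  rw [hsetoid]
  letI : Fintype {w : ZMod n → Bool // P w} := Fintype.ofFinite {w : ZMod n → Bool // P w}
  letI : Fintype (Quotient (AddAction.orbitRel (ZMod n) {w : ZMod n → Bool // P w})) :=
    Fintype.ofFinite _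
  letI : ∀ t : ZMod n, Fintype (AddAction.fixedBy {w : ZMod n → Bool // P w} t) := fun t =>
    Fintype.ofFinite _
  have hburn := AddAction.sum_card_fixedBy_eq_card_orbits_mul_card_addGroup (ZMod n)
    {w : ZMod n → Bool // P w}
  have hcard : Nat.card (Quotient (AddAction.orbitRel (ZMod n) {w : ZMod n → Bool // P w}))
      = Fintype.card (Quotient (AddAction.orbitRel (ZMod n) {w : ZMod n → Bool // P w})) :=
    Nat.card_eq_fintype_card
  have hburn' : (∑ t : ZMod n, Fintype.card
        (AddAction.fixedBy {w : ZMod n → Bool // P w} t))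
      = Fintype.card (Quotient (AddAction.orbitRel (ZMod n) {w : ZMod n → Bool // P w})) * n := by
    rw [hburn, ZMod.card]
  rw [hcard, ← hburn']
  have h1 : (∑ t : ZMod n, Fintype.card (AddAction.fixedBy {w : ZMod n → Bool // P w} t))
      = Fintype.card (Σ t : ZMod n, AddAction.fixedBy {w : ZMod n → Bool // P w} t) := by
    rw [Fintype.card_sigma]
  have e : (Σ t : ZMod n, AddAction.fixedBy {w : ZMod n → Bool // P w} t)
      ≃ (Σ w : {w : ZMod n → Bool // P w}, {t : ZMod n // t +ᵥ w = w}) :=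
    calc (Σ t : ZMod n, AddAction.fixedBy {w : ZMod n → Bool // P w} t)
        ≃ {p : ZMod n × {w : ZMod n → Bool // P w} // p.1 +ᵥ p.2 = p.2} :=
          (Equiv.subtypeProdEquivSigmaSubtype _).symm
      _ ≃ {p : {w : ZMod n → Bool // P w} × ZMod n // p.2 +ᵥ p.1 = p.1} :=
          (Equiv.prodComm _ _).subtypeEquiv fun _ => Iff.rfl
      _ ≃ Σ w : {w : ZMod n → Bool // P w}, {t : ZMod n // t +ᵥ w = w} :=
          Equiv.subtypeProdEquivSigmaSubtype
            (fun (w : {w : ZMod n → Bool // P w}) (t : ZMod n) => t +ᵥ w = w)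
  have h2 : ∀ w : {w : ZMod n → Bool // P w},
      Fintype.card {t : ZMod n // t +ᵥ w = w} = coPeriod n w.val := by
    intro w
    rw [← Nat.card_eq_fintype_card]
    exact Nat.card_congr (Equiv.subtypeEquivRight (fun t => by
      rw [Subtype.ext_iff, hvadd]
      constructor
      · intro h i; exact congrFun h i
      · intro h; funext i; exact h i))
  rw [h1, Fintype.card_congr e, Fintype.card_sigma]
  rw [Finset.sum_congr rfl (fun w _ => h2 w)]
  exact (Finset.sum_subtype (univ.filter P)
    (fun w => by simp) (fun w => coPeriod n w)).symm

end ActionAux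

section CountAux

lemma NrAux.card_val_mod (n m : ℕ) [NeZero n] (hm : m ∣ n) (hm0 : m ≠ 0) (c : ℕ) (hc : c < m) :
    Nat.card {x : ZMod n // x.val % m = c} = n / m := by
  have hnm : m * (n / m) = n := Nat.mul_div_cancel' hm
  have e : {x : ZMod n // x.val % m = c} ≃ Fin (n / m) := by
    refine ⟨fun x => ⟨x.val.val / m, Nat.div_lt_div_of_lt_of_dvd hm x.val.val_lt⟩,
      fun s => ⟨((c + s.val * m : ℕ) : ZMod n), ?_⟩, fun x => ?_, fun s => ?_⟩
    · have hlt : c + s.val * m < n := by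
        calc c + s.val * m < m + s.val * m := by omega
          _ = (s.val + 1) * m := by ring
          _ ≤ (n / m) * m := Nat.mul_le_mul_right _ (by have := s.isLt; omega)
          _ = n := by rw [mul_comm]; exact hnm
      rw [ZMod.val_cast_of_lt hlt, Nat.add_mul_mod_self_right, Nat.mod_eq_of_lt hc]
    · apply Subtype.ext
      have hdm := Nat.div_add_mod x.val.val m
      have hcomm : x.val.val / m * m = m * (x.val.val / m) := Nat.mul_comm _ _
      have h1 : c + x.val.val / m * m = x.val.val := by
        have hx := x.prop
        omega
      show ((c + x.val.val / m * m : ℕ) : ZMod n) = x.val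
      rw [h1, ZMod.natCast_zmod_val]
    · have hlt : c + s.val * m < n := by
        calc c + s.val * m < m + s.val * m := by omega
          _ = (s.val + 1) * m := by ring
          _ ≤ (n / m) * m := Nat.mul_le_mul_right _ (by have := s.isLt; omega)
          _ = n := by rw [mul_comm]; exact hnm
      apply Fin.ext
      show (((c + s.val * m : ℕ) : ZMod n)).val / m = s.val
      rw [ZMod.val_cast_of_lt hlt, Nat.add_mul_div_right _ _ (Nat.pos_of_ne_zero hm0),
        Nat.div_eq_of_lt hc, Nat.zero_add]
  rw [Nat.card_congr e, Nat.card_eq_fintype_card, Fintype.card_fin]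

lemma NrAux.zmod_nsmul_eq_zero_iff (n m : ℕ) [NeZero n] (hm : m ∣ n) (hm0 : m ≠ 0) (x : ZMod n) :
    m • x = 0 ↔ x.val % (n / m) = 0 := by
  have hn0 : n ≠ 0 := NeZero.ne n
  have hnm : m * (n / m) = n := Nat.mul_div_cancel' hm
  have hnm0 : n / m ≠ 0 := by intro h; rw [h, mul_zero] at hnm; exact hn0 hnm.symm
  have h1 : m • x = ((m * x.val : ℕ) : ZMod n) := by
    rw [nsmul_eq_mul, Nat.cast_mul, ZMod.natCast_zmod_val]
  rw [h1, ZMod.natCast_eq_zero_iff]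
  constructor
  · rintro ⟨e, he⟩
    apply Nat.mod_eq_zero_of_dvd
    refine ⟨e, ?_⟩
    apply Nat.eq_of_mul_eq_mul_left (Nat.pos_of_ne_zero hm0)
    rw [he, ← mul_assoc, hnm]
  · intro h
    obtain ⟨e, he⟩ := Nat.dvd_of_mod_eq_zero h
    refine ⟨e, ?_⟩
    rw [he, ← mul_assoc, hnm]

lemma NrAux.card_nsmul_zero (n m : ℕ) [NeZero n] (hm : m ∣ n) (hm0 : m ≠ 0) :
    Nat.card {x : ZMod n // m • x = 0} = m := by
  have hn0 : n ≠ 0 := NeZero.ne n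
  have hnm : m * (n / m) = n := Nat.mul_div_cancel' hm
  have hnm0 : n / m ≠ 0 := by intro h; rw [h, mul_zero] at hnm; exact hn0 hnm.symm
  have hc := card_val_mod n (n / m) (Nat.div_dvd_of_dvd hm) hnm0 0 (Nat.pos_of_ne_zero hnm0)
  rw [Nat.div_div_self hm hn0] at hc
  calc Nat.card {x : ZMod n // m • x = 0}
      = Nat.card {x : ZMod n // x.val % (n / m) = 0} :=
        Nat.card_congr (Equiv.subtypeEquivRight (fun x => zmod_nsmul_eq_zero_iff n m hm hm0 x))
    _ = m := hc

lemma NrAux.dvd_card_addSubgroup_iff (n d : ℕ) [NeZero n] (hd : d ∣ n)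
    (S : AddSubgroup (ZMod n)) :
    d ∣ Nat.card S ↔ ((n / d : ℕ) : ZMod n) ∈ S := by
  have hn0 : n ≠ 0 := NeZero.ne n
  have hd0 : d ≠ 0 := by rintro rfl; exact hn0 (Nat.eq_zero_of_zero_dvd hd)
  constructor
  · intro hdm
    have hm0 : Nat.card S ≠ 0 := Nat.card_pos.ne'
    have hmn : Nat.card S ∣ n := by
      have := AddSubgroup.card_addSubgroup_dvd_card S
      rwa [Nat.card_zmod] at this
    have hsub : (S : Set (ZMod n)) ⊆ {x | Nat.card S • x = 0} := by
      intro x hx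
      exact addOrderOf_dvd_iff_nsmul_eq_zero.mp (AddSubgroup.addOrderOf_dvd_natCard S hx)
    have hK : Nat.card {x : ZMod n // Nat.card S • x = 0} = Nat.card S :=
      card_nsmul_zero n _ hmn hm0
    have hEq : (S : Set (ZMod n)) = {x | Nat.card S • x = 0} := by
      apply Set.eq_of_subset_of_ncard_le hsub _ (Set.toFinite _)
      rw [← Nat.card_coe_set_eq, ← Nat.card_coe_set_eq]
      have h2 : Nat.card {x : ZMod n | Nat.card S • x = 0} =
          Nat.card {x : ZMod n // Nat.card S • x = 0} :=
        Nat.card_congr (Equiv.subtypeEquivRight (fun x => Iff.rfl))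
      have h3 : Nat.card ((S : Set (ZMod n)) : Type) = Nat.card S := rfl
      rw [h2, hK, h3]
    have hmem : ((n / d : ℕ) : ZMod n) ∈ {x : ZMod n | Nat.card S • x = 0} := by
      show Nat.card S • ((n / d : ℕ) : ZMod n) = 0
      obtain ⟨c, hc⟩ := hdm
      have hmul : Nat.card S * (n / d) = c * n := by
        rw [hc, mul_comm d c, mul_assoc, Nat.mul_div_cancel' hd]
      rw [show (Nat.card S) • (((n / d : ℕ)) : ZMod n) = ((Nat.card S * (n / d) : ℕ) : ZMod n) by
          rw [nsmul_eq_mul, Nat.cast_mul],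
        hmul, Nat.cast_mul, ZMod.natCast_self, mul_zero]
    rw [← SetLike.mem_coe, hEq]
    exact hmem
  · intro hg
    have horder : addOrderOf ((n / d : ℕ) : ZMod n) = d := by
      rw [ZMod.addOrderOf_coe _ hn0, Nat.gcd_eq_right (Nat.div_dvd_of_dvd hd),
        Nat.div_div_self hd hn0]
    have := AddSubgroup.addOrderOf_dvd_natCard S hg
    rwa [horder] at this

lemma NrAux.coPeriod_eq_stab (n : ℕ) [NeZero n] (w : ZMod n → Bool) :
    coPeriod n w = Nat.card (AddAction.stabilizer (ZMod n) w) := by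
  unfold coPeriod
  refine Nat.card_congr (Equiv.subtypeEquivRight (fun t => ?_))
  rw [AddAction.mem_stabilizer_iff]
  constructor
  · intro h; funext i; exact h i
  · intro h i; exact congrFun h i

lemma NrAux.coPeriod_dvd (n : ℕ) [NeZero n] (w : ZMod n → Bool) : coPeriod n w ∣ n := by
  rw [coPeriod_eq_stab]
  have := AddSubgroup.card_addSubgroup_dvd_card (AddAction.stabilizer (ZMod n) w)
  rwa [Nat.card_zmod] at this

lemma NrAux.coPeriod_ne_zero (n : ℕ) [NeZero n] (w : ZMod n → Bool) : coPeriod n w ≠ 0 := by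
  unfold coPeriod
  haveI : Nonempty {t : ZMod n // ∀ i, w (i + t) = w i} := ⟨0, fun i => by rw [add_zero]⟩
  exact Nat.card_pos.ne'

lemma NrAux.dvd_coPeriod_iff (n d : ℕ) [NeZero n] (hd : d ∣ n) (w : ZMod n → Bool) :
    d ∣ coPeriod n w ↔ ∀ i, w (i + ((n / d : ℕ) : ZMod n)) = w i := by
  rw [coPeriod_eq_stab, dvd_card_addSubgroup_iff n d hd]
  rw [AddAction.mem_stabilizer_iff]
  constructor
  · intro h i; exact congrFun h i
  · intro h; funext i; exact h i

end CountAux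

section WordCountAux

lemma NrAux.onesCount_eq_filter (n : ℕ) [NeZero n] [DecidableEq (ZMod n)] (w : ZMod n → Bool) :
    onesCount n w = (univ.filter (fun i => w i = true)).card := by
  unfold onesCount
  rw [Nat.card_eq_fintype_card, Fintype.card_subtype]

lemma NrAux.card_words_onesCount (m k : ℕ) [NeZero m] :
    (univ.filter (fun v : ZMod m → Bool => onesCount m v = k)).card = m.choose k := by
  classical
  have hpc := Finset.card_powersetCard k (univ : Finset (ZMod m))
  rw [Finset.card_univ, ZMod.card] at hpc
  rw [← hpc]
  apply Finset.card_bij (fun v _ => univ.filter (fun j => v j = true))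
  · intro v hv
    rw [Finset.mem_powersetCard]
    exact ⟨Finset.filter_subset _ _, by
      rw [Finset.mem_filter] at hv
      rw [← onesCount_eq_filter]
      exact hv.2⟩
  · intro v₁ h₁ v₂ h₂ h
    funext j
    have := Finset.ext_iff.mp h j
    simp only [Finset.mem_filter, Finset.mem_univ, true_and] at this
    cases hj : v₁ j <;> cases hj2 : v₂ j <;> simp [hj, hj2] at this ⊢
  · intro A hA
    rw [Finset.mem_powersetCard] at hA
    refine ⟨fun i => decide (i ∈ A), ?_, ?_⟩
    · rw [Finset.mem_filter]
      refine ⟨Finset.mem_univ _, ?_⟩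
      rw [onesCount_eq_filter]
      rw [← hA.2]
      congr 1
      ext i
      simp
    · ext i
      simp

lemma NrAux.period_iff (n d : ℕ) [NeZero n] (hd : d ∣ n) (w : ZMod n → Bool)
    (hm : (n / d) ∣ n) :
    (∀ i, w (i + ((n / d : ℕ) : ZMod n)) = w i) ↔
      ∃ v : ZMod (n / d) → Bool, w = fun i => v (ZMod.castHom hm (ZMod (n / d)) i) := by
  have hn0 : n ≠ 0 := NeZero.ne n
  set m := n / d with hmdef
  have hm0 : m ≠ 0 := by
    intro h
    rw [hmdef] at h
    have h2 := Nat.mul_div_cancel' hd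
    rw [h, mul_zero] at h2
    exact hn0 h2.symm
  haveI : NeZero m := ⟨hm0⟩
  set π := ZMod.castHom hm (ZMod m) with hπ
  have hπ_cast : ∀ a : ℕ, π ((a : ℕ) : ZMod n) = ((a : ℕ) : ZMod m) := fun a => map_natCast π a
  constructor
  · intro h
    have hmul : ∀ (c : ℕ) (i : ZMod n), w (i + ((c * m : ℕ) : ZMod n)) = w i := by
      intro c
      induction c with
      | zero => intro i; simp
      | succ c ih =>
        intro i
        have heq : ((c + 1) * m : ℕ) = (c * m) + m := by ring
        rw [heq, Nat.cast_add, ← add_assoc]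
        rw [show i + ((c * m : ℕ) : ZMod n) + ((m : ℕ) : ZMod n)
            = (i + ((c * m : ℕ) : ZMod n)) + ((m : ℕ) : ZMod n) from rfl, h, ih]
    refine ⟨fun j => w ((j.val : ℕ) : ZMod n), ?_⟩
    funext i
    have hval : (π i).val = i.val % m := by
      conv_lhs => rw [show i = ((i.val : ℕ) : ZMod n) from (ZMod.natCast_zmod_val i).symm]
      rw [hπ_cast, ZMod.val_natCast]
    show w i = w ((((π i).val : ℕ)) : ZMod n)
    rw [hval]
    have hsplit : i = ((i.val % m : ℕ) : ZMod n) + ((i.val / m * m : ℕ) : ZMod n) := by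
      conv_lhs => rw [show i = ((i.val : ℕ) : ZMod n) from (ZMod.natCast_zmod_val i).symm]
      rw [← Nat.cast_add]
      congr 1
      exact (Nat.mod_add_div' i.val m).symm
    conv_lhs => rw [hsplit]
    exact hmul (i.val / m) _
  · rintro ⟨v, rfl⟩
    intro i
    simp only
    rw [map_add, hπ_cast m, ZMod.natCast_self, add_zero]

lemma NrAux.card_fiber (n d : ℕ) [NeZero n] (hd : d ∣ n) (hm : (n / d) ∣ n) (hm0 : n / d ≠ 0)
    (j : ZMod (n / d)) :
    (univ.filter (fun i : ZMod n => ZMod.castHom hm (ZMod (n / d)) i = j)).card = d := by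
  haveI : NeZero (n / d) := ⟨hm0⟩
  have hn0 : n ≠ 0 := NeZero.ne n
  have hval : ∀ i : ZMod n, ZMod.castHom hm (ZMod (n / d)) i = j ↔ i.val % (n / d) = j.val := by
    intro i
    have hcast : ZMod.castHom hm (ZMod (n / d)) i = ((i.val : ℕ) : ZMod (n / d)) := by
      conv_lhs => rw [show i = ((i.val : ℕ) : ZMod n) from (ZMod.natCast_zmod_val i).symm]
      exact map_natCast _ i.val
    constructor
    · intro h
      have hv : (ZMod.castHom hm (ZMod (n / d)) i).val = j.val := by rw [h]
      rw [hcast, ZMod.val_natCast] at hv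
      exact hv
    · intro h
      apply ZMod.val_injective
      rw [hcast, ZMod.val_natCast, h]
  have h1 : (univ.filter (fun i : ZMod n => ZMod.castHom hm (ZMod (n / d)) i = j)).card
      = Nat.card {i : ZMod n // i.val % (n / d) = j.val} := by
    rw [Nat.card_eq_fintype_card, Fintype.card_subtype]
    congr 1
    apply Finset.filter_congr
    intro i _
    exact hval i
  rw [h1, card_val_mod n (n / d) hm hm0 j.val j.val_lt, Nat.div_div_self hd hn0]

lemma NrAux.onesCount_pullback (n d : ℕ) [NeZero n] (hd : d ∣ n) (hm : (n / d) ∣ n)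
    (hm0 : n / d ≠ 0) (v : ZMod (n / d) → Bool) :
    onesCount n (fun i => v (ZMod.castHom hm (ZMod (n / d)) i)) = d * onesCount (n / d) v := by
  classical
  haveI : NeZero (n / d) := ⟨hm0⟩
  rw [onesCount_eq_filter, onesCount_eq_filter]
  rw [Finset.card_eq_sum_card_fiberwise
    (f := fun i : ZMod n => ZMod.castHom hm (ZMod (n / d)) i) (t := univ)
    (fun x _ => Finset.mem_univ _)]
  have hstep : ∀ j : ZMod (n / d),
      ((univ.filter (fun i : ZMod n => v (ZMod.castHom hm (ZMod (n / d)) i) = true)).filter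
        (fun i => ZMod.castHom hm (ZMod (n / d)) i = j)).card
      = if v j = true then d else 0 := by
    intro j
    rw [Finset.filter_filter]
    by_cases hv : v j = true
    · rw [if_pos hv]
      have heq : (univ.filter (fun i : ZMod n =>
          v (ZMod.castHom hm (ZMod (n / d)) i) = true ∧ ZMod.castHom hm (ZMod (n / d)) i = j))
          = (univ.filter (fun i : ZMod n => ZMod.castHom hm (ZMod (n / d)) i = j)) := by
        apply Finset.filter_congr
        intro i _
        constructor
        · rintro ⟨_, h2⟩; exact h2
        · intro h2; exact ⟨by rw [h2]; exact hv, h2⟩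
      rw [heq]
      exact card_fiber n d hd hm hm0 j
    · rw [if_neg hv, Finset.card_eq_zero]
      rw [Finset.filter_eq_empty_iff]
      rintro i _ ⟨h1, h2⟩
      rw [h2] at h1
      exact hv h1
  rw [Finset.sum_congr rfl (fun j _ => hstep j)]
  rw [← Finset.sum_filter]
  rw [Finset.sum_const, smul_eq_mul, mul_comm]

lemma NrAux.card_periodic (n d k : ℕ) [NeZero n] (hd : d ∣ n) (hd0 : d ≠ 0) :
    (univ.filter (fun w : ZMod n → Bool =>
      onesCount n w = k ∧ ∀ i, w (i + ((n / d : ℕ) : ZMod n)) = w i)).card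
    = if d ∣ k then (n / d).choose (k / d) else 0 := by
  classical
  have hn0 : n ≠ 0 := NeZero.ne n
  have hm : (n / d) ∣ n := Nat.div_dvd_of_dvd hd
  have hm0 : n / d ≠ 0 := by
    intro h
    have h2 := Nat.mul_div_cancel' hd
    rw [h, mul_zero] at h2
    exact hn0 h2.symm
  haveI : NeZero (n / d) := ⟨hm0⟩
  have hstep1 : (univ.filter (fun w : ZMod n → Bool =>
      onesCount n w = k ∧ ∀ i, w (i + ((n / d : ℕ) : ZMod n)) = w i)).card
      = (univ.filter (fun v : ZMod (n / d) → Bool => d * onesCount (n / d) v = k)).card := by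
    apply Finset.card_bij' (fun w _ => fun j : ZMod (n / d) => w ((j.val : ℕ) : ZMod n))
      (fun v _ => fun i : ZMod n => v (ZMod.castHom hm (ZMod (n / d)) i))
    · intro w hw
      rw [Finset.mem_filter] at hw ⊢
      have hones := hw.2.1
      have hper := hw.2.2
      obtain ⟨v, rfl⟩ := (period_iff n d hd w hm).mp hper
      have hto : (fun j : ZMod (n / d) => v (ZMod.castHom hm (ZMod (n / d)) ((j.val : ℕ) : ZMod n)))
          = v := by
        funext j
        rw [map_natCast, ZMod.natCast_zmod_val]
      refine ⟨Finset.mem_univ _, ?_⟩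
      rw [hto, ← onesCount_pullback n d hd hm hm0 v, hones]
    · intro v hv
      rw [Finset.mem_filter] at hv ⊢
      refine ⟨Finset.mem_univ _, ?_, ?_⟩
      · rw [onesCount_pullback n d hd hm hm0 v]
        exact hv.2
      · exact (period_iff n d hd _ hm).mpr ⟨v, rfl⟩
    · intro w hw
      rw [Finset.mem_filter] at hw
      obtain ⟨v, rfl⟩ := (period_iff n d hd w hm).mp hw.2.2
      funext i
      simp only
      rw [map_natCast, ZMod.natCast_zmod_val]
    · intro v hv
      funext j
      simp only
      rw [map_natCast, ZMod.natCast_zmod_val]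
  rw [hstep1]
  by_cases hk : d ∣ k
  · obtain ⟨c, rfl⟩ := hk
    rw [if_pos (Dvd.intro c rfl), Nat.mul_div_cancel_left c (Nat.pos_of_ne_zero hd0)]
    rw [← card_words_onesCount (n / d) c]
    congr 1
    apply Finset.filter_congr
    intro v _
    constructor
    · intro h
      exact Nat.eq_of_mul_eq_mul_left (Nat.pos_of_ne_zero hd0) h
    · intro h
      rw [h]
  · rw [if_neg hk, Finset.card_eq_zero, Finset.filter_eq_empty_iff]
    intro v _
    intro h
    exact hk ⟨onesCount (n / d) v, h.symm⟩

end WordCountAux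

open NrAux in
/-- `|Nᵣ(n,k)| = (1/n) ∑_{d ∣ gcd(n,k)} C(n/d,k/d) c_d(r)`. -/
theorem Nr_count (n k r : ℕ) (hn : 1 ≤ n) (hk : k ≤ n) (hr : r < n) :
    (NrCard n k r : ℤ) * n =
      ∑ d ∈ (Nat.gcd n k).divisors, ((n / d).choose (k / d) : ℤ) * ramanujanSum d r := by
  classical
  haveI : NeZero n := ⟨by omega⟩
  have hn0 : n ≠ 0 := by omega
  -- Step 1: Burnside
  have hB := card_quot_mul n (fun w => onesCount n w = k ∧ coPeriod n w ∣ r)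
    (fun t w hw => ⟨by rw [onesCount_vadd]; exact hw.1, by rw [coPeriod_vadd]; exact hw.2⟩)
  have h1 : (NrCard n k r : ℤ) * n = ∑ w ∈ univ.filter
      (fun w : ZMod n → Bool => onesCount n w = k ∧ coPeriod n w ∣ r), (coPeriod n w : ℤ) := by
    rw [NrCard]
    have hBc := congrArg (fun x : ℕ => (x : ℤ)) hB
    push_cast at hBc
    exact hBc
  rw [h1]
  -- Step 2: go to sum over words with k ones, with an indicator
  have h2 : (∑ w ∈ univ.filter
        (fun w : ZMod n → Bool => onesCount n w = k ∧ coPeriod n w ∣ r), (coPeriod n w : ℤ))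
      = ∑ w ∈ univ.filter (fun w : ZMod n → Bool => onesCount n w = k),
          (if coPeriod n w ∣ r then (coPeriod n w : ℤ) else 0) := by
    rw [← Finset.filter_filter, Finset.sum_filter]
  rw [h2]
  -- Step 3: Ramanujan sum identity
  have h3 : ∀ w : ZMod n → Bool,
      (if coPeriod n w ∣ r then (coPeriod n w : ℤ) else 0)
        = ∑ d ∈ n.divisors, (if d ∣ coPeriod n w then ramanujanSum d r else 0) := by
    intro w
    rw [← Finset.sum_filter, Nat.divisors_filter_dvd_of_dvd hn0 (coPeriod_dvd n w)]
    exact (sum_ramanujanSum r (coPeriod n w)).symm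
  rw [Finset.sum_congr rfl (fun w _ => h3 w)]
  -- Step 4: swap sums
  rw [Finset.sum_comm]
  -- Step 5: evaluate inner sums
  have h5 : ∀ d ∈ n.divisors,
      (∑ w ∈ univ.filter (fun w : ZMod n → Bool => onesCount n w = k),
        (if d ∣ coPeriod n w then ramanujanSum d r else 0))
      = (if d ∣ k then ((n / d).choose (k / d) : ℤ) else 0) * ramanujanSum d r := by
    intro d hdmem
    have hd : d ∣ n := Nat.dvd_of_mem_divisors hdmem
    have hd0 : d ≠ 0 := (Nat.pos_of_mem_divisors hdmem).ne'
    rw [← Finset.sum_filter, Finset.filter_filter, Finset.sum_const]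
    have hcongr : (univ.filter (fun w : ZMod n → Bool =>
        onesCount n w = k ∧ d ∣ coPeriod n w))
        = (univ.filter (fun w : ZMod n → Bool =>
        onesCount n w = k ∧ ∀ i, w (i + ((n / d : ℕ) : ZMod n)) = w i)) := by
      apply Finset.filter_congr
      intro w _
      rw [dvd_coPeriod_iff n d hd w]
    rw [hcongr, card_periodic n d k hd hd0]
    split <;> simp [mul_comm]
  rw [Finset.sum_congr rfl h5]
  -- Step 6: restrict to divisors of gcd
  have h6 : (Nat.gcd n k).divisors = n.divisors.filter (· ∣ k) := by
    ext j
    simp only [Nat.mem_divisors, Finset.mem_filter, Nat.dvd_gcd_iff]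
    constructor
    · rintro ⟨⟨h1', h2'⟩, _⟩; exact ⟨⟨h1', hn0⟩, h2'⟩
    · rintro ⟨⟨h1', _⟩, h2'⟩
      refine ⟨⟨h1', h2'⟩, ?_⟩
      simp [Nat.gcd_eq_zero_iff, hn0]
  rw [h6, Finset.sum_filter]
  apply Finset.sum_congr rfl
  intro d _
  split <;> simp
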